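/- arXiv:2107.13215 — 2 statements merged into one kernel-verified Lean document; each statement's English description precedes it below -/
import Mathlib

section
/- For any prime p and positive integers k and r, any two Galois rings constructed as Z/p^k Z[x]/(f(x)) with f monic of degree r and irreducible modulo p are isomorphic; that is, the isomorphism class of GR(p^k, r) is determined by p, k and r. -/
open Polynomial AdjoinRoot

theorem ker_cast (p k : ℕ) (hp : p.Prime) (hk : 0 < k) :
    RingHom.ker (ZMod.castHom (dvd_pow_self p hk.ne') (ZMod p)) =
      Ideal.span {(p : ZMod (p^k))} := by
  have : NeZero (p^k) := ⟨pow_ne_zero _ hp.ne_zero⟩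
  ext x
  simp only [RingHom.mem_ker, Ideal.mem_span_singleton]
  constructor
  · intro h
    have hx : ((x.val : ℕ) : ZMod p) = 0 := by
      have := ZMod.castHom_apply (h := dvd_pow_self p hk.ne') (R := ZMod p) x
      rw [this, ZMod.cast_eq_val] at h
      exact h
    rw [ZMod.natCast_eq_zero_iff] at hx
    obtain ⟨c, hc⟩ := hx
    refine ⟨(c : ZMod (p^k)), ?_⟩
    have hv : ((x.val : ℕ) : ZMod (p^k)) = x := ZMod.natCast_zmod_val x
    rw [← hv, hc]
    push_cast; ring
  · rintro ⟨c, rfl⟩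
    rw [map_mul]
    have : (ZMod.castHom (dvd_pow_self p hk.ne') (ZMod p)) (p : ZMod (p^k)) = 0 := by
      rw [map_natCast, ZMod.natCast_self]
    rw [this, zero_mul]

/-- residue ring of AdjoinRoot q is AdjoinRoot of the reduction -/
noncomputable def GRres (p k : ℕ) (hp : p.Prime) (hk : 0 < k)
    (q : Polynomial (ZMod (p^k))) :
    (AdjoinRoot q ⧸ Ideal.span {(p : AdjoinRoot q)}) ≃+*
      AdjoinRoot (q.map (ZMod.castHom (dvd_pow_self p hk.ne') (ZMod p))) := by
  set π := ZMod.castHom (dvd_pow_self p hk.ne') (ZMod p)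
  set I₀ : Ideal (ZMod (p^k)) := Ideal.span {(p : ZMod (p^k))}
  have h1 : Ideal.span {(p : AdjoinRoot q)} = I₀.map (AdjoinRoot.of q) := by
    rw [Ideal.map_span, Set.image_singleton, map_natCast]
  have e0 : (ZMod (p^k) ⧸ I₀) ≃+* ZMod p :=
    (Ideal.quotEquivOfEq (ker_cast p k hp hk).symm).trans
      (RingHom.quotientKerEquivOfSurjective (ZMod.ringHom_surjective π))
  have hcomp : (e0 : (ZMod (p^k) ⧸ I₀) →+* ZMod p).comp (Ideal.Quotient.mk I₀) = π :=
    RingHom.ext_zmod _ _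
  refine (Ideal.quotEquivOfEq h1).trans
    ((AdjoinRoot.quotAdjoinRootEquivQuotPolynomialQuot I₀ q).trans
      (Ideal.quotientEquiv _ _ (Polynomial.mapEquiv e0) ?_))
  rw [Ideal.map_span, Set.image_singleton]
  simp only [RingEquiv.toRingHom_eq_coe, RingHom.coe_coe, Polynomial.mapEquiv_apply,
    Polynomial.map_map, hcomp]

theorem GR_of_eq_zero {R : Type*} [CommRing R] {q : R[X]} (hm : q.Monic)
    (hd : 0 < q.natDegree) {c : R} (h : AdjoinRoot.of q c = 0) : c = 0 := by
  by_contra hc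
  have h2 : AdjoinRoot.mk q (C c) = 0 := h
  rw [AdjoinRoot.mk_eq_zero] at h2
  obtain ⟨t, ht⟩ := h2
  have htz : t ≠ 0 := by
    rintro rfl
    rw [mul_zero] at ht
    exact hc (by simpa using ht)
  have hdeg : (C c).natDegree = q.natDegree + t.natDegree := by
    rw [ht, Polynomial.natDegree_mul'
      (by rw [hm.leadingCoeff, one_mul]; exact Polynomial.leadingCoeff_ne_zero.mpr htz)]
  simp only [Polynomial.natDegree_C] at hdeg
  omega

theorem GR_p_nilpotent {p k : ℕ} {q : Polynomial (ZMod (p^k))} :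
    (p : AdjoinRoot q)^k = 0 := by
  have : ((p^k : ℕ) : AdjoinRoot q) = AdjoinRoot.of q ((p^k : ℕ) : ZMod (p^k)) :=
    (map_natCast _ _).symm
  rw [ZMod.natCast_self, map_zero] at this
  exact_mod_cast this

theorem GR_span_le_jacobson {p k : ℕ} {q : Polynomial (ZMod (p^k))} :
    Ideal.span {(p : AdjoinRoot q)} ≤ (⊥ : Ideal (AdjoinRoot q)).jacobson := by
  rw [Ideal.span_le]
  intro x hx
  rw [Set.mem_singleton_iff] at hx
  subst hx
  rw [SetLike.mem_coe, Ideal.mem_jacobson_bot]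
  intro y
  exact ((Commute.all _ y).isNilpotent_mul_right ⟨k, GR_p_nilpotent⟩).isUnit_add_one

theorem adicComplete_of_nilpotent {R : Type*} [CommRing R] {I : Ideal R} {n : ℕ}
    (h : I ^ n = ⊥) : IsAdicComplete I R := by
  have key : ∀ m, (I ^ m • ⊤ : Submodule R R) = I ^ m := fun m => by
    rw [← Ideal.one_eq_top, Ideal.smul_eq_mul, mul_one]
  haveI : IsHausdorff I R := by
    refine ⟨fun x hx => ?_⟩
    have := hx n
    rw [SModEq.zero, key, h] at this
    simpa using this
  haveI : IsPrecomplete I R := by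
    refine ⟨fun f hf => ?_⟩
    refine ⟨f n, fun m => ?_⟩
    rcases le_total m n with h1 | h1
    · exact hf h1
    · have h2 : f n ≡ f m [SMOD (I ^ n • ⊤ : Submodule R R)] := hf h1
      rw [key, h] at h2
      have h3 : f n = f m := by simpa [SModEq.bot] using h2
      rw [h3]
  constructor

-- cardinality of AdjoinRoot over ZMod m of a monic poly
theorem GR_card {m : ℕ} [NeZero m] {q : Polynomial (ZMod m)} (hm : q.Monic) :
    Nat.card (AdjoinRoot q) = m ^ q.natDegree := by
  have b := AdjoinRoot.powerBasisAux' hm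
  have e := b.equivFun.toEquiv
  rw [Nat.card_congr e]
  simp [Nat.card_eq_fintype_card, ZMod.card]

theorem GR_exists_root (p k r : ℕ) (hp : p.Prime) (hk : 0 < k) (hr : 0 < r)
    (f g : Polynomial (ZMod (p ^ k)))
    (hfm : f.Monic) (hgm : g.Monic) (hfd : f.natDegree = r) (hgd : g.natDegree = r)
    (hfi : Irreducible (f.map (ZMod.castHom (dvd_pow_self p hk.ne') (ZMod p))))
    (hgi : Irreducible (g.map (ZMod.castHom (dvd_pow_self p hk.ne') (ZMod p)))) :
    ∃ a : AdjoinRoot f, g.eval₂ (AdjoinRoot.of f) a = 0 := by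
  haveI : Fact p.Prime := ⟨hp⟩
  set π := ZMod.castHom (dvd_pow_self p hk.ne') (ZMod p) with hπ
  set B := AdjoinRoot f
  set J : Ideal B := Ideal.span {(p : B)} with hJdef
  have hJk : J ^ k = ⊥ := by
    rw [hJdef, Ideal.span_singleton_pow, Ideal.span_singleton_eq_bot]
    exact GR_p_nilpotent
  haveI : IsAdicComplete J B := adicComplete_of_nilpotent hJk
  haveI : HenselianRing B J := inferInstance
  -- the two residue fields
  haveI := Fact.mk hfi
  haveI := Fact.mk hgi
  set F := AdjoinRoot (g.map π)
  set F' := AdjoinRoot (f.map π)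
  letI : Fintype F := Fintype.ofEquiv _ (AdjoinRoot.powerBasisAux' (hgm.map π)).equivFun.toEquiv.symm
  letI : Fintype F' := Fintype.ofEquiv _ (AdjoinRoot.powerBasisAux' (hfm.map π)).equivFun.toEquiv.symm
  have cardF : Nat.card F = p ^ r := by
    rw [Nat.card_congr (AdjoinRoot.powerBasisAux' (hgm.map π)).equivFun.toEquiv]
    simp [Nat.card_eq_fintype_card, ZMod.card, (hgm.natDegree_map π), hgd]
  have cardF' : Nat.card F' = p ^ r := by
    rw [Nat.card_congr (AdjoinRoot.powerBasisAux' (hfm.map π)).equivFun.toEquiv]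
    simp [Nat.card_eq_fintype_card, ZMod.card, (hfm.natDegree_map π), hfd]
  have ψ : F ≃+* F' := FiniteField.ringEquivOfCardEq (by
    rw [← Nat.card_eq_fintype_card, ← Nat.card_eq_fintype_card, cardF, cardF'])
  set e : (B ⧸ J) ≃+* F' := GRres p k hp hk f
  set b : F' := ψ (AdjoinRoot.root (g.map π)) with hb
  obtain ⟨a₀, ha₀⟩ := Ideal.Quotient.mk_surjective (e.symm b)
  -- key computation: for any polynomial t over ZMod (p^k),
  -- e (mk J (t.eval₂ (of f) a₀)) = (t.map π).eval₂ (of (f.map π)) b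
  have key : ∀ t : Polynomial (ZMod (p^k)),
      e (Ideal.Quotient.mk J (t.eval₂ (AdjoinRoot.of f) a₀)) =
        (t.map π).eval₂ (AdjoinRoot.of (f.map π)) b := by
    intro t
    rw [Polynomial.hom_eval₂, ← RingEquiv.coe_toRingHom e, Polynomial.hom_eval₂,
      Polynomial.eval₂_map]
    congr 1
    · exact RingHom.ext_zmod _ _
    · rw [ha₀]
      simp
  -- and over in F', pulling through ψ:
  have key2 : ∀ s : Polynomial (ZMod p),
      s.eval₂ (AdjoinRoot.of (f.map π)) b = ψ (s.eval₂ (AdjoinRoot.of (g.map π)) (AdjoinRoot.root (g.map π))) := by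
    intro s
    rw [hb, ← RingEquiv.coe_toRingHom ψ, Polynomial.hom_eval₂]
    congr 1
    exact RingHom.ext_zmod _ _
  have h1 : (g.map (AdjoinRoot.of f)).eval a₀ ∈ J := by
    rw [← Ideal.Quotient.eq_zero_iff_mem, Polynomial.eval_map]
    apply e.injective
    rw [key, key2, AdjoinRoot.eval₂_root, map_zero, map_zero]
  have h2 : IsUnit (Ideal.Quotient.mk J ((g.map (AdjoinRoot.of f)).derivative.eval a₀)) := by
    rw [Polynomial.derivative_map, Polynomial.eval_map]
    have : e (Ideal.Quotient.mk J (g.derivative.eval₂ (AdjoinRoot.of f) a₀)) =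
        ψ ((g.derivative.map π).eval₂ (AdjoinRoot.of (g.map π)) (AdjoinRoot.root (g.map π))) := by
      rw [key, key2]
    have hsep : (g.map π).Separable := PerfectField.separable_of_irreducible hgi
    have hne : (g.derivative.map π).eval₂ (AdjoinRoot.of (g.map π)) (AdjoinRoot.root (g.map π)) ≠ 0 := by
      obtain ⟨u, v, huv⟩ := hsep
      intro hzero
      have := congrArg (Polynomial.eval₂ (AdjoinRoot.of (g.map π)) (AdjoinRoot.root (g.map π))) huv
      rw [Polynomial.eval₂_add, Polynomial.eval₂_mul, Polynomial.eval₂_mul, AdjoinRoot.eval₂_root,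
        Polynomial.derivative_map, hzero, Polynomial.eval₂_one, mul_zero, mul_zero, add_zero] at this
      exact zero_ne_one this
    have hunit : IsUnit (e (Ideal.Quotient.mk J (g.derivative.eval₂ (AdjoinRoot.of f) a₀))) := by
      rw [this]
      exact (isUnit_iff_ne_zero).mpr (fun hh => hne (by
        apply ψ.injective; rw [hh, map_zero]))
    have := hunit.map e.symm.toRingHom
    simpa using this
  obtain ⟨a, ha, -⟩ := HenselianRing.is_henselian (R := B) (I := J)
    (g.map (AdjoinRoot.of f)) (hgm.map _) a₀ h1 h2
  exact ⟨a, by rw [← Polynomial.eval_map]; exact ha⟩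

theorem GR_isUnit {p k : ℕ} (hp : p.Prime) (hk : 0 < k)
    {q : Polynomial (ZMod (p^k))}
    (hqi : Irreducible (q.map (ZMod.castHom (dvd_pow_self p hk.ne') (ZMod p))))
    {u : AdjoinRoot q} (hu : u ∉ Ideal.span {(p : AdjoinRoot q)}) : IsUnit u := by
  haveI : Fact p.Prime := ⟨hp⟩
  set J : Ideal (AdjoinRoot q) := Ideal.span {(p : AdjoinRoot q)}
  haveI hloc := isLocalHom_of_le_jacobson_bot J GR_span_le_jacobson
  haveI := Fact.mk hqi
  have e := GRres p k hp hk q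
  have hne : Ideal.Quotient.mk J u ≠ 0 := by rwa [Ne, Ideal.Quotient.eq_zero_iff_mem]
  have h1 : IsUnit (e (Ideal.Quotient.mk J u)) :=
    isUnit_iff_ne_zero.mpr (fun h => hne (e.injective (by rw [h, map_zero])))
  have h2 := h1.map e.symm.toRingHom
  simp only [RingEquiv.toRingHom_eq_coe, RingHom.coe_coe, RingEquiv.symm_apply_apply] at h2
  exact hloc.map_nonunit u h2

theorem GR_hom_injective {p k r : ℕ} (hp : p.Prime) (hk : 0 < k) (hr : 0 < r)
    {f g : Polynomial (ZMod (p ^ k))}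
    (hfm : f.Monic) (hgm : g.Monic) (hfd : f.natDegree = r) (hgd : g.natDegree = r)
    (hgi : Irreducible (g.map (ZMod.castHom (dvd_pow_self p hk.ne') (ZMod p))))
    (Φ : AdjoinRoot g →+* AdjoinRoot f) : Function.Injective Φ := by
  classical
  set A := AdjoinRoot g
  set B := AdjoinRoot f
  have key : ∀ i, i ≤ k → RingHom.ker Φ ≤ Ideal.span {(p : A)^i} := by
    intro i
    induction i with
    | zero => intro _; simp [Ideal.span_singleton_one]
    | succ i ih =>
      intro hik x hx
      have hxi := ih (by omega) hx
      rw [Ideal.mem_span_singleton] at hxi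
      obtain ⟨y, hy⟩ := hxi
      by_cases hyJ : y ∈ Ideal.span {(p : A)}
      · rw [Ideal.mem_span_singleton] at hyJ
        obtain ⟨z, hz⟩ := hyJ
        rw [Ideal.mem_span_singleton, hy, hz]
        exact ⟨z, by ring⟩
      · exfalso
        have hyu : IsUnit y := GR_isUnit hp hk hgi hyJ
        obtain ⟨u, rfl⟩ := hyu
        have hpow : ((p : A)^i) ∈ RingHom.ker Φ := by
          have : (p : A)^i = x * ↑u⁻¹ := by
            rw [hy, mul_assoc, Units.mul_inv, mul_one]
          rw [this]
          exact Ideal.mul_mem_right _ _ hx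
        rw [RingHom.mem_ker] at hpow
        have h0 : ((p^i : ℕ) : B) = 0 := by
          have := hpow
          rw [map_pow, map_natCast] at this
          push_cast
          exact this
        have h1 : ((p^i : ℕ) : ZMod (p^k)) = 0 := by
          apply GR_of_eq_zero hfm (by omega)
          rw [map_natCast]
          exact h0
        rw [ZMod.natCast_eq_zero_iff] at h1
        have := (Nat.pow_dvd_pow_iff_le_right hp.one_lt).mp h1
        omega
  have hker : RingHom.ker Φ = ⊥ := by
    refine le_antisymm ?_ bot_le
    refine (key k le_rfl).trans ?_
    rw [GR_p_nilpotent, Ideal.span_singleton_eq_bot.mpr rfl]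
  rwa [← RingHom.injective_iff_ker_eq_bot] at hker

/-- Any two Galois rings `ℤ/p^kℤ[x]/(f)` with `f` monic of degree `r` and irreducible
modulo `p` are isomorphic: the isomorphism class of `GR(p^k, r)` depends only on `p, k, r`. -/
theorem stmt_8 (p k r : ℕ) (hp : p.Prime) (hk : 0 < k) (hr : 0 < r)
    (f g : Polynomial (ZMod (p ^ k)))
    (hfm : f.Monic) (hgm : g.Monic) (hfd : f.natDegree = r) (hgd : g.natDegree = r)
    (hfi : Irreducible (f.map (ZMod.castHom (dvd_pow_self p hk.ne') (ZMod p))))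
    (hgi : Irreducible (g.map (ZMod.castHom (dvd_pow_self p hk.ne') (ZMod p)))) :
    Nonempty ((Polynomial (ZMod (p ^ k)) ⧸ Ideal.span {f})
      ≃+* (Polynomial (ZMod (p ^ k)) ⧸ Ideal.span {g})) := by
  haveI : Fact p.Prime := ⟨hp⟩
  haveI : NeZero (p^k) := ⟨pow_ne_zero _ hp.ne_zero⟩
  obtain ⟨a, ha⟩ := GR_exists_root p k r hp hk hr f g hfm hgm hfd hgd hfi hgi
  set Φ : AdjoinRoot g →+* AdjoinRoot f := AdjoinRoot.lift (AdjoinRoot.of f) a ha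
  have hinj := GR_hom_injective hp hk hr hfm hgm hfd hgd hgi Φ
  haveI : Finite (AdjoinRoot f) :=
    Finite.of_equiv _ (AdjoinRoot.powerBasisAux' hfm).equivFun.toEquiv.symm
  have hcard : Nat.card (AdjoinRoot g) = Nat.card (AdjoinRoot f) := by
    rw [GR_card hfm, GR_card hgm, hfd, hgd]
  have hbij : Function.Bijective Φ :=
    (Nat.bijective_iff_injective_and_card Φ).mpr ⟨hinj, hcard⟩
  exact ⟨(RingEquiv.ofBijective Φ hbij).symm⟩
end

section
/- Up to isomorphism there are exactly 4 two-dimensional F₂-algebras A (associative, not necessarily commutative or unital) whose Jacobson radical N is one-dimensional with N² = 0 and with A/N ≅ F₂. They are distinguished by an idempotent e and nilpotent x with e² = e, x² = 0, and the four possibilities (i) ex = xe = x, (ii) ex = xe = 0, (iii) ex = x, xe = 0, (iv) ex = 0, xe = x; each of these four structures is associative and no two are isomorphic. -/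
/-- The Jacobson radical of a not-necessarily-unital ring `R`, defined as the set of
elements of `R` lying in the Jacobson radical of the unitization `ℤ ⊕ R`. -/
def jacobsonSet (R : Type*) [NonUnitalRing R] : Set R :=
  {x | (x : Unitization ℤ R) ∈ (⊥ : Ideal (Unitization ℤ R)).jacobson}

/-- The multiplication on the two-dimensional `𝔽₂`-space with basis `e = (1,0)`,
`x = (0,1)` determined bilinearly by `e² = e`, `x² = 0`, `e·x = α x`, `x·e = β x`,
where `α, β ∈ 𝔽₂`.  The four parameter choices `(α,β) = (1,1), (0,0), (1,0), (0,1)`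
give the four multiplications (i)–(iv). -/
def mul17 (α β : ZMod 2) (v w : ZMod 2 × ZMod 2) : ZMod 2 × ZMod 2 :=
  (v.1 * w.1, α * v.1 * w.2 + β * v.2 * w.1)

section aux
variable {R : Type*} [NonUnitalRing R]

lemma js_zero : (0:R) ∈ jacobsonSet R := by simp [jacobsonSet]

lemma js_mul_left (a : R) {b : R} (hb : b ∈ jacobsonSet R) : a * b ∈ jacobsonSet R := by
  simpa [jacobsonSet] using Ideal.mul_mem_left _ (a : Unitization ℤ R) hb

lemma js_mul_right {a : R} (b : R) (ha : a ∈ jacobsonSet R) : a * b ∈ jacobsonSet R := by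
  have := Ideal.mul_mem_right (I := (⊥ : Ideal (Unitization ℤ R)).jacobson)
    (a := (a : Unitization ℤ R)) (b : Unitization ℤ R)
    (by simpa [jacobsonSet] using ha)
  simpa [jacobsonSet] using this
end aux

/-- Up to isomorphism there are exactly 4 two-dimensional `𝔽₂`-algebras `A` (associative,
not necessarily unital or commutative) whose Jacobson radical `N` is one-dimensional with
`N² = 0` and `A/N ≅ 𝔽₂`: the four structures `mul17 α β` with basis `{e, x}`, `e² = e`,
`x² = 0` and `(ex, xe) = (αx, βx)`.  Each of the four is associative, no two are
isomorphic, and every such algebra `A` is isomorphic to one of them. -/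


theorem stmt_17 :
    (∀ α β : ZMod 2, ∀ x y z : ZMod 2 × ZMod 2,
      mul17 α β (mul17 α β x y) z = mul17 α β x (mul17 α β y z)) ∧
    (∀ α β α' β' : ZMod 2, (α, β) ≠ (α', β') →
      ¬ ∃ φ : (ZMod 2 × ZMod 2) ≃ (ZMod 2 × ZMod 2),
        (∀ a b, φ (a + b) = φ a + φ b) ∧
        (∀ a b, φ (mul17 α β a b) = mul17 α' β' (φ a) (φ b))) ∧
    (∀ (A : Type) (_ : NonUnitalRing A) (_ : Fintype A),
      Fintype.card A = 4 → (∀ a : A, a + a = 0) →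
      Nat.card (jacobsonSet A) = 2 →
      (∀ x y : A, x ∈ jacobsonSet A → y ∈ jacobsonSet A → x * y = 0) →
      (∃ a : A, a ∉ jacobsonSet A ∧ a * a - a ∈ jacobsonSet A) →
      ∃ (α β : ZMod 2) (φ : A ≃ (ZMod 2 × ZMod 2)),
        (∀ a b : A, φ (a + b) = φ a + φ b) ∧
        (∀ a b : A, φ (a * b) = mul17 α β (φ a) (φ b))) := by
  refine ⟨by decide, by decide, ?_⟩
  intro A _ _ hcard hchar hN hN2 hEx
  obtain ⟨a, haN, haa⟩ := hEx
  have hneg : ∀ y : A, -y = y := fun y => neg_eq_of_add_eq_zero_left (hchar y)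
  -- extract the nonzero radical element x
  have h0 : (0:A) ∈ jacobsonSet A := js_zero
  have h2 : (jacobsonSet A).ncard = 2 := by rw [← Nat.card_coe_set_eq]; exact hN
  obtain ⟨p, q, hpq, hset⟩ := Set.ncard_eq_two.mp h2
  obtain ⟨x, hx0, hxset⟩ : ∃ x : A, x ≠ 0 ∧ jacobsonSet A = {0, x} := by
    rw [hset] at h0
    rcases h0 with h | h
    · exact ⟨q, fun hq => hpq (h ▸ hq ▸ rfl), by rw [hset, ← h]⟩
    · exact ⟨p, fun hp => hpq (h ▸ hp ▸ rfl), by rw [hset, ← h, Set.pair_comm]⟩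
  have hmemN : ∀ n : A, n ∈ jacobsonSet A ↔ (n = 0 ∨ n = x) := by
    intro n; rw [hxset]; simp
  have hxN : x ∈ jacobsonSet A := (hmemN x).mpr (Or.inr rfl)
  have hxx : x * x = 0 := hN2 x x hxN hxN
  -- get an idempotent e outside the radical
  obtain ⟨e, hee, heN⟩ : ∃ e : A, e * e = e ∧ e ∉ jacobsonSet A := by
    rcases (hmemN _).mp haa with h | h
    · exact ⟨a, sub_eq_zero.mp h, haN⟩
    · have haa' : a * a = x + a := by rw [sub_eq_iff_eq_add] at h; exact h
      have hax : a * x = x * a := by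
        have h3 := mul_assoc a a a
        rw [haa'] at h3
        rw [mul_add, add_mul, haa'] at h3
        exact (add_right_cancel h3).symm
      refine ⟨a + x, ?_, ?_⟩
      · have hc : x * a + x * a = 0 := hchar _
        calc (a+x)*(a+x) = a*a + a*x + (x*a + x*x) := by rw [add_mul, mul_add, mul_add]
        _ = x + a + x*a + (x*a + 0) := by rw [haa', hax, hxx]
        _ = (x + a) + (x*a + x*a) := by rw [add_zero, add_assoc]
        _ = a + x := by rw [hc, add_zero, add_comm]
      · intro hmem
        rcases (hmemN _).mp hmem with h' | h'
        · refine haN ?_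
          have : a = x := by
            have := eq_neg_of_add_eq_zero_left h'
            rwa [hneg] at this
          rw [this]; exact hxN
        · have ha0 : a = 0 := by
            have h'' : a + x = 0 + x := by rw [h', zero_add]
            exact add_right_cancel h''
          exact haN (ha0 ▸ h0)
  -- basic distinctness
  have he0 : e ≠ 0 := fun h => heN (h ▸ h0)
  have hex : e ≠ x := fun h => heN (h ▸ hxN)
  have hsz : e + x ≠ 0 := by
    intro h
    have : e = x := by have := eq_neg_of_add_eq_zero_left h; rwa [hneg] at this
    exact hex this
  have hsx : e + x ≠ x := by
    intro h
    have h'' : e + x = 0 + x := by rw [h, zero_add]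
    exact he0 (add_right_cancel h'')
  have hse : e + x ≠ e := by
    intro h
    have h'' : e + x = e + 0 := by rw [h, add_zero]
    exact hx0 (add_left_cancel h'')
  -- products with the radical
  have hEX : e * x = 0 ∨ e * x = x := (hmemN _).mp (js_mul_left e hxN)
  have hXE : x * e = 0 ∨ x * e = x := (hmemN _).mp (js_mul_right e hxN)
  -- the map
  set ψ : ZMod 2 × ZMod 2 → A :=
    fun p => (if p.1 = 1 then e else 0) + (if p.2 = 1 then x else 0) with hψ
  have hzm : ∀ c : ZMod 2, c = 0 ∨ c = 1 := by decide
  have e01 : ((0:ZMod 2) = 1) = False := by decide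
  have e11 : ((1:ZMod 2) = 1) = True := by decide
  have hval : ∀ p1 p2 : ZMod 2,
      ψ (p1, p2) = (if p1 = 1 then e else 0) + (if p2 = 1 then x else 0) := fun _ _ => rfl
  have hinj : Function.Injective ψ := by
    rintro ⟨p1, p2⟩ ⟨q1, q2⟩ h
    rcases hzm p1 with rfl | rfl <;> rcases hzm p2 with rfl | rfl <;>
      rcases hzm q1 with rfl | rfl <;> rcases hzm q2 with rfl | rfl <;>
      [skip; skip; skip; skip; skip; skip; skip; skip; skip; skip; skip; skip; skip; skip;
        skip; skip] <;>
      first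
        | rfl
        | (exfalso
           rw [hval, hval] at h
           simp only [e01, e11, if_true, if_false, add_zero, zero_add] at h
           first
             | exact he0 h | exact he0 h.symm | exact hx0 h | exact hx0 h.symm
             | exact hex h | exact hex h.symm
             | exact hsz h | exact hsz h.symm | exact hsx h | exact hsx h.symm
             | exact hse h | exact hse h.symm)
  have hbij : Function.Bijective ψ :=
    (Fintype.bijective_iff_injective_and_card ψ).mpr ⟨hinj, by simp [hcard]⟩
  have ψadd : ∀ u v, ψ (u + v) = ψ u + ψ v := by
    rintro ⟨p1, p2⟩ ⟨q1, q2⟩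
    rcases hzm p1 with rfl | rfl <;> rcases hzm p2 with rfl | rfl <;>
      rcases hzm q1 with rfl | rfl <;> rcases hzm q2 with rfl | rfl <;>
      simp only [Prod.mk_add_mk, show (0:ZMod 2)+0 = 0 from rfl, show (0:ZMod 2)+1 = 1 from rfl,
        show (1:ZMod 2)+0 = 1 from rfl, show (1:ZMod 2)+1 = 0 by decide,
        hval, e01, e11, if_true, if_false, add_zero, zero_add] <;>
      first
        | rfl
        | (abel_nf; try simp [two_nsmul, two_zsmul, hchar])

  obtain ⟨α, β, hEX', hXE'⟩ : ∃ α β : ZMod 2,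
      e * x = (if α = 1 then x else 0) ∧ x * e = (if β = 1 then x else 0) := by
    rcases hEX with h | h <;> rcases hXE with h' | h'
    exacts [⟨0, 0, by simp [h, h']⟩, ⟨0, 1, by simp [h, h']⟩,
      ⟨1, 0, by simp [h, h']⟩, ⟨1, 1, by simp [h, h']⟩]
  have ψmul : ∀ u v, ψ (mul17 α β u v) = ψ u * ψ v := by
    rintro ⟨p1, p2⟩ ⟨q1, q2⟩
    rcases hzm α with rfl | rfl <;> rcases hzm β with rfl | rfl <;>
      simp only [e01, e11, if_true, if_false] at hEX' hXE' <;>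
      rcases hzm p1 with rfl | rfl <;> rcases hzm p2 with rfl | rfl <;>
      rcases hzm q1 with rfl | rfl <;> rcases hzm q2 with rfl | rfl <;>
      simp only [mul17, mul_one, one_mul, mul_zero, zero_mul, add_zero, zero_add,
        show (1:ZMod 2)+1 = 0 by decide, hval, e01, e11, if_true, if_false,
        mul_add, add_mul, hee, hxx, hEX', hXE'] <;>
      first
        | rfl
        | (abel_nf; try simp [two_nsmul, two_zsmul, hchar])
  let E := Equiv.ofBijective ψ hbij
  have hEs : ∀ y : A, ψ (E.symm y) = y := fun y => E.apply_symm_apply y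
  exact ⟨α, β, E.symm,
    fun a b => hinj (by rw [hEs, ψadd, hEs, hEs]),
    fun a b => hinj (by rw [hEs, ψmul, hEs, hEs])⟩
end
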